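/- arXiv:1301.0672 — 2 statements merged into one kernel-verified Lean document; each statement's English description precedes it below -/
import Mathlib

section
/- Let G₁, …, G_k be functions from subsets of X to a commutative ring, let ω ⊆ X and let Θ be a finite subset of X. Then D_Θ(G₁ ⋯ G_k)(ω) = Σ D_{Θ₁} G₁(ω) ⋯ D_{Θ_k} G_k(ω), where the sum runs over all k-tuples (Θ₁, …, Θ_k) of (possibly empty) subsets of Θ whose union Θ₁ ∪ ⋯ ∪ Θ_k equals Θ. -/
/-- The iterated difference operator
`D_Θ F(ω) := Σ_{η ⊆ Θ} (-1)^{|Θ| - |η|} F(ω ∪ η)`, with values in a commutative ring. -/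
def DTheta {X : Type*} {R : Type*} [CommRing R] [DecidableEq X]
    (Θ : Finset X) (F : Set X → R) (ω : Set X) : R :=
  ∑ η ∈ Θ.powerset, (-1 : R) ^ (Θ.card - η.card) * F (ω ∪ ↑η)

lemma DTheta_insert {X : Type*} {R : Type*} [CommRing R] [DecidableEq X]
    {Θ : Finset X} {x : X} (hx : x ∉ Θ) (F : Set X → R) (ω : Set X) :
    DTheta (insert x Θ) F ω
      = DTheta Θ (fun ω' => F (ω' ∪ {x})) ω - DTheta Θ F ω := by
  simp only [DTheta]
  rw [Finset.sum_powerset_insert hx, Finset.card_insert_of_notMem hx,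
    eq_sub_iff_add_eq, add_right_comm, ← Finset.sum_add_distrib]
  have h0 : ∀ η ∈ Θ.powerset,
      ((-1 : R) ^ (Θ.card + 1 - η.card) * F (ω ∪ ↑η)
        + (-1 : R) ^ (Θ.card - η.card) * F (ω ∪ ↑η)) = 0 := by
    intro η hη
    rw [Finset.mem_powerset] at hη
    have hcard := Finset.card_le_card hη
    have h1 : Θ.card + 1 - η.card = (Θ.card - η.card) + 1 := by omega
    rw [h1, pow_succ]; ring
  rw [Finset.sum_congr rfl h0, Finset.sum_const_zero, zero_add]
  apply Finset.sum_congr rfl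
  intro η hη
  rw [Finset.mem_powerset] at hη
  have hxη : x ∉ η := fun h => hx (hη h)
  have hcard := Finset.card_le_card hη
  rw [Finset.card_insert_of_notMem hxη]
  have h2 : Θ.card + 1 - (η.card + 1) = Θ.card - η.card := by omega
  rw [h2]
  congr 1
  rw [Finset.coe_insert, Set.insert_eq, Set.union_assoc, Set.union_comm {x},
    ← Set.union_assoc]

/-- Inversion: the sum of `D_η F(ω)` over all `η ⊆ Θ` is `F(ω ∪ Θ)`. -/
lemma sum_DTheta_powerset {X : Type*} {R : Type*} [CommRing R] [DecidableEq X]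
    (Θ : Finset X) (F : Set X → R) (ω : Set X) :
    ∑ η ∈ Θ.powerset, DTheta η F ω = F (ω ∪ ↑Θ) := by
  induction Θ using Finset.induction_on generalizing F with
  | empty => simp [DTheta]
  | @insert x Θ hx ih =>
      rw [Finset.sum_powerset_insert hx]
      have h2 : ∀ η ∈ Θ.powerset, DTheta (insert x η) F ω
          = DTheta η (fun ω' => F (ω' ∪ {x})) ω - DTheta η F ω := by
        intro η hη
        rw [Finset.mem_powerset] at hη
        exact DTheta_insert (fun h => hx (hη h)) F ω
      rw [Finset.sum_congr rfl h2, Finset.sum_sub_distrib, ih F]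
      rw [ih (fun ω' => F (ω' ∪ {x}))]
      have : (ω ∪ ↑Θ ∪ {x}) = (ω ∪ ↑(insert x Θ)) := by
        rw [Finset.coe_insert, Set.insert_eq, Set.union_assoc,
          Set.union_comm {x}, ← Set.union_assoc]
      rw [this]
      ring

/-- Product rule:
`D_Θ (G₁ ⋯ G_k)(ω) = Σ D_{Θ₁} G₁(ω) ⋯ D_{Θ_k} G_k(ω)`, the sum running over all
`k`-tuples `(Θ₁, …, Θ_k)` of (possibly empty) subsets of `Θ` whose union is `Θ`. -/
theorem DTheta_prod {X : Type*} {R : Type*} [CommRing R] [DecidableEq X]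
    (k : ℕ) (G : Fin k → Set X → R) (Θ : Finset X) (ω : Set X) :
    DTheta Θ (fun ω' => ∏ i, G i ω') ω
      = ∑ c ∈ (Fintype.piFinset fun _ : Fin k => Θ.powerset).filter
            (fun c => Finset.univ.sup c = Θ),
          ∏ i, DTheta (c i) (G i) ω := by
  induction Θ using Finset.strongInduction with
  | _ Θ ih =>
  -- the key identity: summing both sides over subsets gives the same value
  have key : ∑ T ∈ Θ.powerset, DTheta T (fun ω' => ∏ i, G i ω') ω
      = ∑ T ∈ Θ.powerset,
          ∑ c ∈ (Fintype.piFinset fun _ : Fin k => T.powerset).filter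
              (fun c => Finset.univ.sup c = T),
            ∏ i, DTheta (c i) (G i) ω := by
    rw [sum_DTheta_powerset]
    have hmaps : ∀ c ∈ (Fintype.piFinset fun _ : Fin k => Θ.powerset),
        Finset.univ.sup c ∈ Θ.powerset := by
      intro c hc
      rw [Finset.mem_powerset]
      show Finset.univ.sup c ≤ Θ
      apply Finset.sup_le
      intro i _
      show c i ≤ Θ
      have := Fintype.mem_piFinset.1 hc i
      rwa [Finset.mem_powerset] at this
    have hfib := Finset.sum_fiberwise_of_maps_to hmaps
      (fun c => ∏ i, DTheta (c i) (G i) ω)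
    have hfull : ∑ c ∈ (Fintype.piFinset fun _ : Fin k => Θ.powerset),
        ∏ i, DTheta (c i) (G i) ω = ∏ i, G i (ω ∪ ↑Θ) := by
      have hps := Finset.sum_prod_piFinset (ι := Fin k) Θ.powerset
        (fun i η => DTheta η (G i) ω)
      rw [hps]
      exact Finset.prod_congr rfl fun i _ => sum_DTheta_powerset Θ (G i) ω
    rw [← hfull, ← hfib]
    apply Finset.sum_congr rfl
    intro T hT
    rw [Finset.mem_powerset] at hT
    apply Finset.sum_congr _ (fun _ _ => rfl)
    ext c
    simp only [Finset.mem_filter, Fintype.mem_piFinset, Finset.mem_powerset]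
    constructor
    · rintro ⟨hc, hs⟩
      refine ⟨fun i => ?_, hs⟩
      rw [← hs]
      show c i ≤ Finset.univ.sup c
      exact Finset.le_sup (Finset.mem_univ i)
    · rintro ⟨hc, hs⟩
      exact ⟨fun i => (hc i).trans hT, hs⟩
  -- now split off the term `T = Θ` on both sides
  have hmem : Θ ∈ Θ.powerset := Finset.mem_powerset_self Θ
  rw [← Finset.add_sum_erase _ _ hmem, ← Finset.add_sum_erase _ _ hmem] at key
  have htail : ∑ T ∈ Θ.powerset.erase Θ, DTheta T (fun ω' => ∏ i, G i ω') ω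
      = ∑ T ∈ Θ.powerset.erase Θ,
          ∑ c ∈ (Fintype.piFinset fun _ : Fin k => T.powerset).filter
              (fun c => Finset.univ.sup c = T),
            ∏ i, DTheta (c i) (G i) ω := by
    apply Finset.sum_congr rfl
    intro T hT
    rw [Finset.mem_erase, Finset.mem_powerset] at hT
    exact ih T (lt_of_le_of_ne hT.2 hT.1)
  rw [htail] at key
  exact add_right_cancel key
end

section
/- For every k ≥ 0, every finite configuration ω ⊆ ℝ^d, and every point x ∈ ℝ^d not belonging to the convex hull of ω, one has τ^{(k)}(x, ω) = f^{∘k}(x), the k-fold iterate of f applied to x. -/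
noncomputable section

/-- `ℝ^d` with the Euclidean norm. -/
abbrev Rd (d : ℕ) := EuclideanSpace ℝ (Fin d)

/-- The induced transformation `τ_*` on configurations: `τ_* ω = {τ(x,ω) : x ∈ ω}`. -/
def tauStar {X : Type*} (τ : X → Set X → X) (ω : Set X) : Set X :=
  (fun x => τ x ω) '' ω

/-- The iterates `τ^{(n)}`: `τ^{(0)}(x,ω) = x`,
`τ^{(n)}(x,ω) = τ^{(n-1)}(τ(x,ω), τ_* ω)`. -/
def tauIter {X : Type*} (τ : X → Set X → X) : ℕ → X → Set X → X
  | 0, x, _ => x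
  | n + 1, x, ω => tauIter τ n (τ x ω) (tauStar τ ω)

/-- The set `ω_e` of extreme points of the convex hull of the configuration `ω`. -/
def extPts {d : ℕ} (ω : Set (Rd d)) : Set (Rd d) :=
  (convexHull ℝ ω).extremePoints ℝ

/-- If `x` is outside the convex hull of the finite configuration `ω`, then
`τ^{(k)}(x,ω) = f^{∘k}(x)` for every `k ≥ 0`. -/
theorem tauIter_outside_convexHull (d : ℕ) (hd : 1 ≤ d)
    (f : Rd d → Rd d) (hf_bij : Function.Bijective f)
    (hf_conv : ∀ s : Set (Rd d), Convex ℝ s → Convex ℝ (f '' s))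
    (τhat : Rd d → Set (Rd d) → Rd d)
    (h_ext : ∀ (x : Rd d) (ω : Set (Rd d)), ω.Finite → τhat x ω = τhat x (extPts ω))
    (h_in : ∀ (x : Rd d) (ω : Set (Rd d)), ω.Finite →
      x ∈ interior (convexHull ℝ (extPts ω)) →
      τhat x ω ∈ interior (convexHull ℝ (extPts ω)))
    (h_out : ∀ (x : Rd d) (ω : Set (Rd d)), ω.Finite →
      x ∉ interior (convexHull ℝ (extPts ω)) → τhat x ω = x)
    (k : ℕ) (ω : Set (Rd d)) (hω : ω.Finite) (x : Rd d) (hx : x ∉ convexHull ℝ ω) :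
    tauIter (fun y ω' => f (τhat y ω')) k x ω = f^[k] x := by
  induction k generalizing x ω with
  | zero => rfl
  | succ n ih =>
    have hsub : convexHull ℝ (extPts ω) ⊆ convexHull ℝ ω :=
      convexHull_min (extremePoints_subset) (convex_convexHull ℝ ω)
    have hx' : x ∉ interior (convexHull ℝ (extPts ω)) :=
      fun h => hx (hsub (interior_subset h))
    have hτ : τhat x ω = x := h_out x ω hω hx'
    have hmem : ∀ y ∈ ω, τhat y ω ∈ convexHull ℝ ω := by
      intro y hy
      by_cases h : y ∈ interior (convexHull ℝ (extPts ω))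
      · exact hsub (interior_subset (h_in y ω hω h))
      · rw [h_out y ω hω h]; exact subset_convexHull ℝ ω hy
    have hstep : convexHull ℝ (tauStar (fun y ω' => f (τhat y ω')) ω)
        ⊆ f '' (convexHull ℝ ω) := by
      apply convexHull_min _ (hf_conv _ (convex_convexHull ℝ ω))
      rintro _ ⟨y, hy, rfl⟩
      exact ⟨τhat y ω, hmem y hy, rfl⟩
    have hfx : f x ∉ convexHull ℝ (tauStar (fun y ω' => f (τhat y ω')) ω) := by
      intro h
      obtain ⟨z, hz, hfz⟩ := hstep h
      exact hx (hf_bij.1 hfz ▸ hz)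
    have hfin : (tauStar (fun y ω' => f (τhat y ω')) ω).Finite := hω.image _
    show tauIter (fun y ω' => f (τhat y ω')) n (f (τhat x ω))
        (tauStar (fun y ω' => f (τhat y ω')) ω) = f^[n+1] x
    rw [hτ, ih _ hfin _ hfx, Function.iterate_succ_apply]
end
end
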